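/- In dimension d = 2, the matrix S = [[α, 0, 0, β, 0],[0, h, 0, 0, 0],[0, 0, h, 0, 0],[β, 0, 0, γ, 0],[0,0,0,0,1]] is a symmetrizer of the Favrie-Gavrilyuk system: with A_x, A_y the coefficient matrices of the quasilinear form (whose only nonzero entries are (A_x)_{1,2} = h, (A_x)_{2,1} = α, (A_x)_{2,4} = β, (A_x)_{1,1}=(A_x)_{2,2}=...=u_x on the diagonal, and similarly for A_y), the products S A_x and S A_y are symmetric matrices; moreover, if h ≥ h⋆ > 0 and γ > β²/α, then S is symmetric positive definite. -/

import Mathlib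

/-- Coefficient matrix `A_x` of the quasilinear Favrie-Gavrilyuk system in the
variables `(ζ, u_x, u_y, η, w)`. -/
def FGAx (ux h α β : ℝ) : Matrix (Fin 5) (Fin 5) ℝ :=
  !![ux, h, 0, 0, 0;
     α, ux, 0, β, 0;
     0, 0, ux, 0, 0;
     0, 0, 0, ux, 0;
     0, 0, 0, 0, ux]

/-- Coefficient matrix `A_y`. -/
def FGAy (uy h α β : ℝ) : Matrix (Fin 5) (Fin 5) ℝ :=
  !![uy, 0, h, 0, 0;
     0, uy, 0, 0, 0;
     α, 0, uy, β, 0;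
     0, 0, 0, uy, 0;
     0, 0, 0, 0, uy]

/-- The symmetrizer `S`. -/
def FGS (h α β γ : ℝ) : Matrix (Fin 5) (Fin 5) ℝ :=
  !![α, 0, 0, β, 0;
     0, h, 0, 0, 0;
     0, 0, h, 0, 0;
     β, 0, 0, γ, 0;
     0, 0, 0, 0, 1]

set_option maxHeartbeats 1000000

/-- `S` is a symmetrizer of the Favrie-Gavrilyuk system: `S A_x` and `S A_y` are
symmetric, and if `h ≥ h⋆ > 0` and `γ > β²/α` then `S` is symmetric positive definite. -/
theorem FG_symmetrizer (μ lam η h ux uy hstar γ : ℝ)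
    (hμ : 0 < μ) (hlam : 0 < lam) (hhst : 0 < hstar) (hh : hstar ≤ h)
    (α β : ℝ) (hα : α = 1 + μ * lam * η ^ 2 / (3 * h ^ 3))
    (hβ : β = μ * lam / (3 * h) * (1 - 2 * η / h)) :
    (FGS h α β γ * FGAx ux h α β).IsSymm ∧
    (FGS h α β γ * FGAy uy h α β).IsSymm ∧
    (β ^ 2 / α < γ → (FGS h α β γ).PosDef) := by
  have hhpos : 0 < h := lt_of_lt_of_le hhst hh
  have hαpos : 0 < α := by
    rw [hα]
    have : 0 ≤ μ * lam * η ^ 2 / (3 * h ^ 3) := by positivity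
    linarith
  refine ⟨?_, ?_, ?_⟩
  · ext i j
    fin_cases i <;> fin_cases j <;>
      simp [FGS, FGAx, Matrix.mul_apply, Matrix.transpose_apply, Fin.sum_univ_five,
        Matrix.vecHead, Matrix.vecTail] <;> ring
  · ext i j
    fin_cases i <;> fin_cases j <;>
      simp [FGS, FGAy, Matrix.mul_apply, Matrix.transpose_apply, Fin.sum_univ_five,
        Matrix.vecHead, Matrix.vecTail] <;> ring
  · intro hγ
    refine Matrix.PosDef.of_dotProduct_mulVec_pos ?_ ?_
    · ext i j
      fin_cases i <;> fin_cases j <;> simp [FGS, Matrix.conjTranspose_apply, Matrix.vecHead, Matrix.vecTail]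
    · intro x hx
      have hq : dotProduct x ((FGS h α β γ).mulVec x) =
          α * (x 0 + β / α * x 3) ^ 2 + (γ - β ^ 2 / α) * x 3 ^ 2
            + h * x 1 ^ 2 + h * x 2 ^ 2 + x 4 ^ 2 := by
        simp [FGS, dotProduct, Matrix.mulVec, Fin.sum_univ_five,
          Matrix.vecHead, Matrix.vecTail]
        field_simp
        ring
      have hst : star x = x := by
        funext i; exact star_trivial _
      rw [hst, hq]
      have h1 : 0 ≤ α * (x 0 + β / α * x 3) ^ 2 := by positivity
      have h2 : 0 ≤ (γ - β ^ 2 / α) * x 3 ^ 2 :=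
        mul_nonneg (by linarith) (sq_nonneg _)
      have h3 : 0 ≤ h * x 1 ^ 2 := by positivity
      have h4 : 0 ≤ h * x 2 ^ 2 := by positivity
      have h5 : 0 ≤ x 4 ^ 2 := sq_nonneg _
      rcases eq_or_ne (x 1) 0 with e1 | e1
      rcases eq_or_ne (x 2) 0 with e2 | e2
      rcases eq_or_ne (x 3) 0 with e3 | e3
      rcases eq_or_ne (x 4) 0 with e4 | e4
      · have e0 : x 0 ≠ 0 := by
          intro e0
          apply hx
          ext i
          fin_cases i <;> assumption
        have hx02 : 0 < x 0 ^ 2 :=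
          lt_of_le_of_ne (sq_nonneg _) (Ne.symm (pow_ne_zero 2 e0))
        have : 0 < α * (x 0 + β / α * x 3) ^ 2 := by
          rw [e3]
          simpa using mul_pos hαpos hx02
        linarith
      · have : 0 < x 4 ^ 2 :=
          lt_of_le_of_ne (sq_nonneg _) (Ne.symm (pow_ne_zero 2 e4))
        linarith
      · have hx32 : 0 < x 3 ^ 2 :=
          lt_of_le_of_ne (sq_nonneg _) (Ne.symm (pow_ne_zero 2 e3))
        have : 0 < (γ - β ^ 2 / α) * x 3 ^ 2 := mul_pos (by linarith) hx32
        linarith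
      · have hx22 : 0 < x 2 ^ 2 :=
          lt_of_le_of_ne (sq_nonneg _) (Ne.symm (pow_ne_zero 2 e2))
        have : 0 < h * x 2 ^ 2 := mul_pos hhpos hx22
        linarith
      · have hx12 : 0 < x 1 ^ 2 :=
          lt_of_le_of_ne (sq_nonneg _) (Ne.symm (pow_ne_zero 2 e1))
        have : 0 < h * x 1 ^ 2 := mul_pos hhpos hx12
        linarith
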